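/- Every d-representable finite simplicial complex is d-Matoušek. -/
import Mathlib

open scoped BigOperators

noncomputable section

variable {V : Type*} [Fintype V] [DecidableEq V]

def IsComplex (K : Finset (Finset V)) : Prop :=
  ∅ ∈ K ∧ (∀ v : V, {v} ∈ K) ∧ ∀ F ∈ K, ∀ G ⊆ F, G ∈ K

def facets (K : Finset (Finset V)) : Finset (Finset V) :=
  K.filter fun J => ∀ J' ∈ K, J ⊆ J' → J = J'

def contV (K : Finset (Finset V)) (i : V) : Finset (Finset V) :=
  (facets K).filter fun J => i ∈ J

def dual (K : Finset (Finset V)) : Finset (Finset (Finset V)) :=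
  (facets K).powerset.filter fun α => (α.inf id).Nonempty

def geomFace {W : Type*} [Fintype W] (F : Finset W) : Set (W → ℝ) :=
  {x | (∀ w, 0 ≤ x w) ∧ (∑ w, x w) = 1 ∧ ∀ w, x w ≠ 0 → w ∈ F}

def geom {W : Type*} [Fintype W] (L : Finset (Finset W)) : Set (W → ℝ) :=
  ⋃ F ∈ L, geomFace F

def supp {W : Type*} [Fintype W] [DecidableEq W] (x : W → ℝ) : Finset W :=
  Finset.univ.filter fun w => x w ≠ 0

def Faithful {d : ℕ} (K : Finset (Finset V))
    (f : (Finset V → ℝ) → EuclideanSpace ℝ (Fin d)) : Prop :=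
  ∀ I : Finset V, (⋂ i ∈ I, f '' geomFace (contV K i)).Nonempty → I ∈ K

def affExt {W : Type*} [Fintype W] {E : Type*} [AddCommGroup E] [Module ℝ E]
    (p : W → E) (x : W → ℝ) : E := ∑ w, x w • p w

def Hhat (K : Finset (Finset V)) : Set ((Finset V → ℝ) × (Finset V → ℝ)) :=
  {z | z.1 ∈ geom (dual K) ∧ z.2 ∈ geom (dual K) ∧
    ((supp z.1).inf id ∪ (supp z.2).inf id) ∉ K}

def Matousek (d : ℕ) (K : Finset (Finset V)) : Prop :=
  ∃ g : Hhat K → EuclideanSpace ℝ (Fin d),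
    Continuous g ∧ (∀ z, ‖g z‖ = 1) ∧
    ∀ (x y : Finset V → ℝ) (hxy : (x, y) ∈ Hhat K) (hyx : (y, x) ∈ Hhat K),
      g ⟨(y, x), hyx⟩ = - g ⟨(x, y), hxy⟩

def Representable (d : ℕ) (K : Finset (Finset V)) : Prop :=
  ∃ C : V → Set (EuclideanSpace ℝ (Fin d)),
    (∀ i, Convex ℝ (C i)) ∧ ∀ I : Finset V, I ∈ K ↔ (⋂ i ∈ I, C i).Nonempty

def dimOf {W : Type*} [Fintype W] [DecidableEq W] (L : Finset (Finset W)) : ℕ :=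
  (L.sup Finset.card) - 1

lemma key {d : ℕ} {K : Finset (Finset V)} {C : V → Set (EuclideanSpace ℝ (Fin d))}
    (hC : ∀ i, Convex ℝ (C i)) (p : Finset V → EuclideanSpace ℝ (Fin d))
    (hp : ∀ J ∈ K, p J ∈ ⋂ i ∈ J, C i) {x : Finset V → ℝ}
    (hx : x ∈ geom (dual K)) {i : V} (hi : i ∈ (supp x).inf id) :
    affExt p x ∈ C i := by
  obtain ⟨α, hα, hnn, hsum, hsupp⟩ := Set.mem_iUnion₂.1 hx
  have hαf : α ⊆ facets K := Finset.mem_powerset.1 (Finset.mem_filter.1 hα).1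
  have hzero : ∀ w ∈ Finset.univ, w ∉ supp x → x w • p w = 0 := by
    intro w _ hw
    have : x w = 0 := by
      by_contra h; exact hw (Finset.mem_filter.2 ⟨Finset.mem_univ _, h⟩)
    simp [this]
  have hzero' : ∀ w ∈ Finset.univ, w ∉ supp x → x w = 0 := by
    intro w _ hw
    by_contra h; exact hw (Finset.mem_filter.2 ⟨Finset.mem_univ _, h⟩)
  have heq : affExt p x = ∑ w ∈ supp x, x w • p w :=
    (Finset.sum_subset (Finset.subset_univ _) hzero).symm
  have hsum' : ∑ w ∈ supp x, x w = 1 := by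
    rw [Finset.sum_subset (Finset.subset_univ _) hzero', hsum]
  rw [heq]
  refine (hC i).sum_mem (fun w _ => hnn w) hsum' ?_
  intro w hw
  have hwα : w ∈ α := hsupp w (Finset.mem_filter.1 hw).2
  have hwK : w ∈ K := (Finset.mem_filter.1 (hαf hwα)).1
  have hle : (supp x).inf id ≤ id w := Finset.inf_le hw
  have hiw : i ∈ w := hle hi
  exact Set.mem_iInter₂.1 (hp w hwK) i hiw

theorem stmt9 {d : ℕ} (K : Finset (Finset V)) (hK : IsComplex K)
    (hrep : Representable d K) :
    Matousek d K := by
  obtain ⟨C, hC, hCK⟩ := hrep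
  have hpex : ∀ J : Finset V, ∃ q, J ∈ K → q ∈ ⋂ i ∈ J, C i := by
    intro J
    by_cases hJ : J ∈ K
    · obtain ⟨q, hq⟩ := (hCK J).1 hJ
      exact ⟨q, fun _ => hq⟩
    · exact ⟨0, fun h => absurd h hJ⟩
  choose p hp using hpex
  have hp' : ∀ J ∈ K, p J ∈ ⋂ i ∈ J, C i := fun J hJ => hp J hJ
  set v : Hhat K → EuclideanSpace ℝ (Fin d) :=
    fun z => affExt p z.1.1 - affExt p z.1.2 with hv
  have hvne : ∀ z, v z ≠ 0 := by
    rintro ⟨⟨x, y⟩, hx, hy, hxy⟩ h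
    apply hxy
    rw [hCK]
    have heq : affExt p x = affExt p y := by
      have := sub_eq_zero.1 h
      exact this
    refine ⟨affExt p x, Set.mem_iInter₂.2 fun i hi => ?_⟩
    rcases Finset.mem_union.1 hi with hi | hi
    · exact key hC p hp' hx hi
    · rw [heq]; exact key hC p hp' hy hi
  have hvcont : Continuous v := by
    have h1 : Continuous fun x : Finset V → ℝ => affExt p x := by
      unfold affExt
      exact continuous_finset_sum _ fun w _ => (continuous_apply w).smul continuous_const
    exact ((h1.comp (continuous_fst.comp continuous_subtype_val)).sub
      (h1.comp (continuous_snd.comp continuous_subtype_val)))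
  refine ⟨fun z => ‖v z‖⁻¹ • v z, ?_, ?_, ?_⟩
  · exact ((hvcont.norm.inv₀ fun z => norm_ne_zero_iff.2 (hvne z)).smul hvcont)
  · intro z
    rw [norm_smul, norm_inv, norm_norm,
      inv_mul_cancel₀ (norm_ne_zero_iff.2 (hvne z))]
  · intro x y hxy hyx
    have : v ⟨(y, x), hyx⟩ = - v ⟨(x, y), hxy⟩ := by
      simp [hv, neg_sub]
    simp only [this, norm_neg, smul_neg]
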